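/- Assume v₀ ≤ 0, u₀ < 0 and u₀ + v₀² > 0, so that η(θ) = √((θ − v₀)² + u₀) + v₀ is defined on all of [0,1] with η(θ) > v₀. Define, for v̂ ∈ [v₀, η(0)], Γ₁(v̂) = ∫₀¹ [ ((η(θ) − v̂)/(η(θ) − v₀))·u₀ − ((v̂ − v₀)/(η(θ) − v₀))·(η(θ) − θ)² ] dμ(θ). Then Γ₁ is strictly increasing on [v₀, η(0)]; in particular its maximum on this interval is attained at v̂ = η(0). -/

import Mathlib

open MeasureTheory Set

/-- **`Γ₁` is strictly increasing.** Assume `v₀ ≤ 0`, `u₀ < 0` and `u₀ + v₀² > 0`, so that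
`η(θ) = √((θ − v₀)² + u₀) + v₀` is defined on all of `[0,1]` with `η(θ) > v₀`. Then the
principal's ex ante payoff
`Γ₁(v̂) = ∫₀¹ [((η(θ) − v̂)/(η(θ) − v₀))·u₀ − ((v̂ − v₀)/(η(θ) − v₀))·(η(θ) − θ)²] dμ`
is strictly increasing on `[v₀, η(0)]`; in particular it is maximized there at `v̂ = η(0)`. -/
theorem gamma1_strictMono
    (μ : Measure ℝ) [IsProbabilityMeasure μ]
    (hsupp : μ (Icc (0 : ℝ) 1) = 1)
    (hfull : ∀ a b : ℝ, 0 ≤ a → a < b → b ≤ 1 → 0 < μ (Ioo a b))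
    (v₀ u₀ : ℝ) (hv₀ : v₀ ≤ 0) (hu₀ : u₀ < 0) (hpos : 0 < u₀ + v₀ ^ 2)
    (η : ℝ → ℝ) (hη : ∀ θ, η θ = Real.sqrt ((θ - v₀) ^ 2 + u₀) + v₀)
    (Γ₁ : ℝ → ℝ)
    (hΓ₁ : ∀ vhat, Γ₁ vhat = ∫ θ in Icc (0 : ℝ) 1,
        ((η θ - vhat) / (η θ - v₀) * u₀ - (vhat - v₀) / (η θ - v₀) * (η θ - θ) ^ 2) ∂μ) :
    (∀ θ ∈ Icc (0 : ℝ) 1, v₀ < η θ) ∧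
      StrictMonoOn Γ₁ (Icc v₀ (η 0)) ∧
      ∀ vhat ∈ Icc v₀ (η 0), Γ₁ vhat ≤ Γ₁ (η 0) := by
  -- positivity of the sqrt argument on [0,1]
  have hcrit : ∀ θ ∈ Icc (0 : ℝ) 1, 0 < (θ - v₀) ^ 2 + u₀ := by
    intro θ hθ
    nlinarith [hθ.1, hθ.2]
  have hspos : ∀ θ ∈ Icc (0 : ℝ) 1, 0 < Real.sqrt ((θ - v₀) ^ 2 + u₀) := by
    intro θ hθ; exact Real.sqrt_pos.mpr (hcrit θ hθ)
  have hηv : ∀ θ ∈ Icc (0 : ℝ) 1, v₀ < η θ := by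
    intro θ hθ; rw [hη θ]; linarith [hspos θ hθ]
  have hden : ∀ θ ∈ Icc (0 : ℝ) 1, η θ - v₀ ≠ 0 := by
    intro θ hθ; have := hηv θ hθ; linarith
  -- pointwise key inequality : (η θ - θ)^2 < -u₀
  have hkey : ∀ θ ∈ Icc (0 : ℝ) 1, 0 < -u₀ - (η θ - θ) ^ 2 := by
    intro θ hθ
    have hs := hspos θ hθ
    have hsq : Real.sqrt ((θ - v₀) ^ 2 + u₀) ^ 2 = (θ - v₀) ^ 2 + u₀ :=
      Real.sq_sqrt (le_of_lt (hcrit θ hθ))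
    have hx : 0 ≤ θ - v₀ := by linarith [hθ.1]
    have hxs : Real.sqrt ((θ - v₀) ^ 2 + u₀) < θ - v₀ := by nlinarith
    rw [hη θ]
    nlinarith
  -- continuity
  have hηc : Continuous η := by
    have h : (fun θ => Real.sqrt ((θ - v₀) ^ 2 + u₀) + v₀) = η := funext fun θ => (hη θ).symm
    rw [← h]
    exact (Real.continuous_sqrt.comp (by continuity)).add continuous_const
  set g : ℝ → ℝ := fun θ => (-u₀ - (η θ - θ) ^ 2) / (η θ - v₀) with hg
  have hgc : ContinuousOn g (Icc (0 : ℝ) 1) := by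
    apply ContinuousOn.div
    · exact (continuousOn_const.sub ((hηc.continuousOn.sub continuousOn_id).pow 2))
    · exact hηc.continuousOn.sub continuousOn_const
    · exact hden
  set F : ℝ → ℝ → ℝ := fun v θ =>
    (η θ - v) / (η θ - v₀) * u₀ - (v - v₀) / (η θ - v₀) * (η θ - θ) ^ 2 with hF
  have hFc : ∀ v, ContinuousOn (F v) (Icc (0 : ℝ) 1) := by
    intro v
    apply ContinuousOn.sub
    · exact ((hηc.continuousOn.sub continuousOn_const).div
        (hηc.continuousOn.sub continuousOn_const) hden).mul continuousOn_const
    · exact (continuousOn_const.div (hηc.continuousOn.sub continuousOn_const) hden).mul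
        ((hηc.continuousOn.sub continuousOn_id).pow 2)
  have hFi : ∀ v, IntegrableOn (F v) (Icc (0 : ℝ) 1) μ := fun v =>
    (hFc v).integrableOn_compact isCompact_Icc
  have hgi : IntegrableOn g (Icc (0 : ℝ) 1) μ := hgc.integrableOn_compact isCompact_Icc
  -- positivity of ∫ g
  obtain ⟨θ₀, hθ₀, hmin'⟩ :=
    isCompact_Icc.exists_isMinOn (nonempty_Icc.mpr (zero_le_one)) hgc
  have hmin : ∀ θ ∈ Icc (0:ℝ) 1, g θ₀ ≤ g θ := fun θ hθ => hmin' hθ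
  have hgθ₀ : 0 < g θ₀ := by
    have := hkey θ₀ hθ₀
    have h2 := hηv θ₀ hθ₀
    exact div_pos this (by linarith)
  have hμ : (μ (Icc (0 : ℝ) 1)).toReal = 1 := by simp [hsupp]
  have hintg : 0 < ∫ θ in Icc (0 : ℝ) 1, g θ ∂μ := by
    have hle : g θ₀ * (μ (Icc (0 : ℝ) 1)).toReal ≤ ∫ θ in Icc (0 : ℝ) 1, g θ ∂μ :=
      setIntegral_ge_of_const_le_real measurableSet_Icc
        (by simp [hsupp]) hmin hgi
    rw [hμ, mul_one] at hle
    linarith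
  -- affine difference identity
  have hdiff : ∀ a b : ℝ, Γ₁ b - Γ₁ a = (b - a) * ∫ θ in Icc (0 : ℝ) 1, g θ ∂μ := by
    intro a b
    rw [hΓ₁ a, hΓ₁ b]
    have hsub : (∫ θ in Icc (0 : ℝ) 1, F b θ ∂μ) - (∫ θ in Icc (0 : ℝ) 1, F a θ ∂μ)
        = ∫ θ in Icc (0 : ℝ) 1, (F b θ - F a θ) ∂μ := (integral_sub (hFi b) (hFi a)).symm
    have : (∫ θ in Icc (0 : ℝ) 1, (F b θ - F a θ) ∂μ)
        = ∫ θ in Icc (0 : ℝ) 1, (b - a) * g θ ∂μ := by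
      apply setIntegral_congr_fun measurableSet_Icc
      intro θ hθ
      have hne := hden θ hθ
      simp only [hF, hg]
      field_simp
      ring
    calc (∫ θ in Icc (0 : ℝ) 1, F b θ ∂μ) - (∫ θ in Icc (0 : ℝ) 1, F a θ ∂μ)
        = ∫ θ in Icc (0 : ℝ) 1, (b - a) * g θ ∂μ := by rw [hsub, this]
      _ = (b - a) * ∫ θ in Icc (0 : ℝ) 1, g θ ∂μ := integral_const_mul _ _
  have hmono : StrictMonoOn Γ₁ (Icc v₀ (η 0)) := by
    intro a _ b _ hab
    have := hdiff a b
    nlinarith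
  refine ⟨hηv, hmono, ?_⟩
  intro v hv
  rcases eq_or_lt_of_le hv.2 with h | h
  · rw [h]
  · exact le_of_lt (hmono hv ⟨by linarith [hηv 0 (by constructor <;> norm_num)], le_refl _⟩ h)
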